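/- There exists a constant C > 0 such that for every t > 0 and every r with 0 < r < 2t, the two-dimensional Lebesgue measure of the set {(θ₁, θ₂) ∈ [0, 2π]² : dist(k_{θ₁} · (e^{−t}·i), e^{−t}·i) ≤ r and dist(k_{θ₂} · (e^{−t}·i), e^{−t}·i) ≤ r} is at most C·e^{−2t+r}. -/

import Mathlib

open UpperHalfPlane MeasureTheory

/-- The rotation matrix `[[cos θ, sin θ], [−sin θ, cos θ]]` as an element of `SL(2, ℝ)`. -/
noncomputable def rotSL (θ : ℝ) : Matrix.SpecialLinearGroup (Fin 2) ℝ :=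
  ⟨!![Real.cos θ, Real.sin θ; -Real.sin θ, Real.cos θ], by
    rw [Matrix.det_fin_two_of]
    nlinarith [Real.sin_sq_add_cos_sq θ]⟩

/-- The point `e^{−t}·i` of the hyperbolic upper half-plane. -/
noncomputable def ptI' (t : ℝ) : UpperHalfPlane :=
  ⟨⟨0, Real.exp (-t)⟩, by simpa using Real.exp_pos (-t)⟩

/-- Spherical measure estimate, `SO(2,2)` case: there is a constant `C > 0` such that for all
`t > 0` and `0 < r < 2t`, the two-dimensional Lebesgue measure of the set of pairs of angles
`(θ₁, θ₂) ∈ [0, 2π]²` with `dist (k_{θᵢ} · e^{−t} i, e^{−t} i) ≤ r` for `i = 1, 2`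
is at most `C·e^{−2t+r}`. -/
lemma coe_rot_smul (t θ : ℝ) : ((rotSL θ • ptI' t : ℍ) : ℂ) =
    ((Real.cos θ : ℂ) * (ptI' t : ℂ) + (Real.sin θ : ℂ)) /
      ((-Real.sin θ : ℂ) * (ptI' t : ℂ) + (Real.cos θ : ℂ)) := by
  rw [UpperHalfPlane.specialLinearGroup_apply]
  simp [rotSL]

lemma cosh_dist_rot (t θ : ℝ) :
    Real.cosh (dist (rotSL θ • ptI' t) (ptI' t)) =
      1 + Real.sin θ ^ 2 * (Real.exp t - Real.exp (-t)) ^ 2 / 2 := by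
  set y := Real.exp (-t) with hy
  have hy0 : 0 < y := Real.exp_pos _
  have hye : Real.exp t = 1 / y := by
    rw [hy, Real.exp_neg, one_div, inv_inv]
  set c := Real.cos θ with hc
  set s := Real.sin θ with hs
  have hcs : s ^ 2 + c ^ 2 = 1 := Real.sin_sq_add_cos_sq θ
  have hcsC : (s : ℂ) ^ 2 + (c : ℂ) ^ 2 = 1 := by exact_mod_cast congrArg (Complex.ofReal) hcs
  have hQ : 0 < c ^ 2 + s ^ 2 * y ^ 2 := by
    rcases eq_or_ne c 0 with hc0 | hc0
    · have : s ^ 2 = 1 := by rw [hc0] at hcs; simpa using hcs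
      rw [hc0, this]; positivity
    · positivity
  have hQC : ((c : ℂ) ^ 2 + (s : ℂ) ^ 2 * (y : ℂ) ^ 2) ≠ 0 := by
    exact_mod_cast Complex.ofReal_ne_zero.2 hQ.ne'
  have hpI : (ptI' t : ℂ) = (y : ℂ) * Complex.I := by
    rw [Complex.ext_iff]; constructor <;> simp [ptI']; exact hy.symm
  have hDsq : Complex.normSq ((-(s:ℂ)) * ((y:ℂ) * Complex.I) + (c : ℂ)) = c ^ 2 + s ^ 2 * y ^ 2 := by
    simp [Complex.normSq_apply]; ring
  have hD : ((-(s:ℂ)) * ((y:ℂ) * Complex.I) + (c : ℂ)) ≠ 0 := by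
    intro h
    rw [h] at hDsq; simp at hDsq; rw [← hDsq] at hQ; simp at hQ
  have hQ1 : (1:ℝ) - (c ^ 2 + s ^ 2 * y ^ 2) = s ^ 2 * (1 - y ^ 2) := by
    linear_combination -hcs
  have hw : ((rotSL θ • ptI' t : ℍ) : ℂ) =
      ((s * c * (1 - y ^ 2) / (c ^ 2 + s ^ 2 * y ^ 2) : ℝ) : ℂ)
        + (((y / (c ^ 2 + s ^ 2 * y ^ 2) : ℝ)) : ℂ) * Complex.I := by
    rw [coe_rot_smul, hpI]
    have e1 : ((s * c * (1 - y ^ 2) / (c ^ 2 + s ^ 2 * y ^ 2) : ℝ) : ℂ)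
        = (s:ℂ) * c * (1 - (y:ℂ)^2) / ((c:ℂ)^2 + (s:ℂ)^2*(y:ℂ)^2) := by push_cast; ring
    have e3 : (((y / (c ^ 2 + s ^ 2 * y ^ 2) : ℝ)) : ℂ) = (y:ℂ)/((c:ℂ)^2 + (s:ℂ)^2*(y:ℂ)^2) := by
      push_cast; ring
    rw [e1, e3, div_mul_eq_mul_div, ← add_div, div_eq_div_iff hD hQC]
    linear_combination (((s:ℂ)*y^2 + c*y*Complex.I)) * hcsC + ((s:ℂ)*(y:ℂ)^2) * Complex.I_sq
  have him : (rotSL θ • ptI' t).im = y / (c ^ 2 + s ^ 2 * y ^ 2) := by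
    rw [← UpperHalfPlane.coe_im, hw]
    simp only [Complex.add_im, Complex.ofReal_im, Complex.mul_im, Complex.I_im, Complex.I_re,
      Complex.ofReal_re, mul_zero, mul_one, zero_add, add_zero]
  have himp : (ptI' t).im = y := rfl
  have h1 : y / (c ^ 2 + s ^ 2 * y ^ 2) - y
      = y * (s ^ 2 * (1 - y ^ 2)) / (c ^ 2 + s ^ 2 * y ^ 2) := by
    rw [← hQ1]
    have hQ4 : (c ^ 2 + s ^ 2 * y ^ 2) ≠ 0 := hQ.ne'
    rw [eq_div_iff hQ4, sub_mul, div_mul_cancel₀ _ hQ4]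
    ring
  have hsub : ((rotSL θ • ptI' t : ℍ) : ℂ) - ((ptI' t : ℍ) : ℂ) =
      ((s * c * (1 - y ^ 2) / (c ^ 2 + s ^ 2 * y ^ 2) : ℝ) : ℂ)
        + (((y / (c ^ 2 + s ^ 2 * y ^ 2) - y : ℝ)) : ℂ) * Complex.I := by
    rw [hw, hpI]
    push_cast
    ring
  have hd : dist ((rotSL θ • ptI' t : ℍ) : ℂ) ((ptI' t : ℍ) : ℂ) ^ 2 =
      s ^ 2 * (1 - y ^ 2) ^ 2 / (c ^ 2 + s ^ 2 * y ^ 2) := by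
    rw [Complex.dist_eq, Complex.sq_norm, hsub, Complex.normSq_add_mul_I, h1]
    have hQ4 : (c ^ 2 + s ^ 2 * y ^ 2) ≠ 0 := hQ.ne'
    field_simp
  rw [UpperHalfPlane.cosh_dist, hd, him, himp, hye]
  have hQ4 : (c ^ 2 + s ^ 2 * y ^ 2) ≠ 0 := hQ.ne'
  field_simp

lemma sin_bound (t r θ : ℝ) (ht : 0 < t) (hr : 0 < r) (hrt : r < 2 * t)
    (h : dist (rotSL θ • ptI' t) (ptI' t) ≤ r) :
    |Real.sin θ| ≤ Real.exp (r / 2 - t) := by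
  have hcosh : Real.cosh (dist (rotSL θ • ptI' t) (ptI' t)) ≤ Real.cosh r := by
    rw [Real.cosh_le_cosh, abs_of_nonneg dist_nonneg, abs_of_pos hr]; exact h
  rw [cosh_dist_rot, Real.cosh_eq] at hcosh
  set s := Real.sin θ
  set E := Real.exp t with hE
  set E' := Real.exp (-t) with hE'
  set R := Real.exp (r / 2) with hR
  set R' := Real.exp (-(r / 2)) with hR'
  have her : Real.exp r = R ^ 2 := by rw [hR, sq, ← Real.exp_add]; ring_nf
  have her' : Real.exp (-r) = R' ^ 2 := by rw [hR', sq, ← Real.exp_add]; ring_nf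
  have hEE : E * E' = 1 := by rw [hE, hE', ← Real.exp_add]; simp
  have hRR : R * R' = 1 := by rw [hR, hR', ← Real.exp_add]; simp
  have hb : Real.exp (r / 2 - t) = R * E' := by rw [hR, hE', ← Real.exp_add]; ring_nf
  have hRE : R ≤ E := Real.exp_le_exp.2 (by linarith)
  have hER' : E' ≤ R' := Real.exp_le_exp.2 (by linarith)
  have hE'0 : (0:ℝ) < E' := Real.exp_pos _
  have hR0 : (0:ℝ) < R := Real.exp_pos _
  have hEE' : E' < E := Real.exp_lt_exp.2 (by linarith)
  have hRR' : R' < R := Real.exp_lt_exp.2 (by linarith)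
  rw [her, her'] at hcosh
  have hsq : (R - R') ^ 2 = R ^ 2 + R' ^ 2 - 2 := by linear_combination (-2 : ℝ) * hRR
  have h3 : s ^ 2 * (E - E') ^ 2 ≤ (R - R') ^ 2 := by rw [hsq]; linarith
  have hre1 : R * E' ≤ 1 := by
    calc R * E' ≤ E * E' := mul_le_mul_of_nonneg_right hRE hE'0.le
    _ = 1 := hEE
  have hre2 : R * E' ^ 2 ≤ R' := by
    calc R * E' ^ 2 = (R * E') * E' := by ring
    _ ≤ 1 * E' := mul_le_mul_of_nonneg_right hre1 hE'0.le
    _ = E' := one_mul _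
    _ ≤ R' := hER'
  have h4 : R - R' ≤ (R * E') * (E - E') := by
    have he : (R * E') * (E - E') = R - R * E' ^ 2 := by linear_combination R * hEE
    rw [he]; linarith
  have h5 : (0:ℝ) ≤ R - R' := by linarith
  have h6 : (0:ℝ) < (E - E') ^ 2 := pow_pos (by linarith) 2
  have h8 : (R - R') ^ 2 ≤ ((R * E') * (E - E')) ^ 2 := by
    have := mul_self_le_mul_self h5 h4
    simpa [sq] using this
  have h7 : s ^ 2 ≤ (R * E') ^ 2 := by
    have h9 : s ^ 2 * (E - E') ^ 2 ≤ (R * E') ^ 2 * (E - E') ^ 2 := by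
      calc s ^ 2 * (E - E') ^ 2 ≤ (R - R') ^ 2 := h3
      _ ≤ ((R * E') * (E - E')) ^ 2 := h8
      _ = (R * E') ^ 2 * (E - E') ^ 2 := by ring
    exact le_of_mul_le_mul_right h9 h6
  rw [hb, ← Real.sqrt_sq_eq_abs]
  calc Real.sqrt (s ^ 2) ≤ Real.sqrt ((R * E') ^ 2) := Real.sqrt_le_sqrt h7
  _ = R * E' := Real.sqrt_sq (by positivity)

lemma jordan_abs (φ : ℝ) (h : |φ| ≤ Real.pi / 2) : |φ| ≤ Real.pi / 2 * |Real.sin φ| := by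
  have hπ : (0:ℝ) < Real.pi := Real.pi_pos
  have h1 : 2 / Real.pi * |φ| ≤ Real.sin |φ| := Real.mul_le_sin (abs_nonneg _) h
  have h2 : Real.sin |φ| ≤ |Real.sin φ| := by
    rcases abs_cases φ with ⟨he, _⟩ | ⟨he, _⟩ <;> rw [he]
    · exact le_abs_self _
    · rw [Real.sin_neg]; exact neg_le_abs _
  have h3 := h1.trans h2
  rw [div_mul_eq_mul_div, div_le_iff₀ hπ] at h3
  nlinarith

open Real in
lemma angle_mem (t r θ : ℝ) (ht : 0 < t) (hr : 0 < r) (hrt : r < 2 * t)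
    (hθ : θ ∈ Set.Icc (0:ℝ) (2 * π))
    (hd : dist (rotSL θ • ptI' t) (ptI' t) ≤ r) :
    θ ∈ Set.Icc (0:ℝ) (π / 2 * Real.exp (r / 2 - t))
      ∪ Set.Icc (π - π / 2 * Real.exp (r / 2 - t)) (π + π / 2 * Real.exp (r / 2 - t))
      ∪ Set.Icc (2 * π - π / 2 * Real.exp (r / 2 - t)) (2 * π) := by
  have hπ : (0:ℝ) < π := Real.pi_pos
  set b := Real.exp (r / 2 - t) with hb
  have hb0 : (0:ℝ) < b := Real.exp_pos _
  have hsin : |Real.sin θ| ≤ b := sin_bound t r θ ht hr hrt hd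
  obtain ⟨hθ0, hθ2⟩ := hθ
  rcases le_or_gt θ (π / 2) with h1 | h1
  · left; left
    refine ⟨hθ0, ?_⟩
    have := jordan_abs θ (by rw [abs_of_nonneg hθ0]; exact h1)
    rw [abs_of_nonneg hθ0] at this
    calc θ ≤ π / 2 * |Real.sin θ| := this
    _ ≤ π / 2 * b := by nlinarith
  · rcases le_or_gt θ (3 * π / 2) with h2 | h2
    · left; right
      have habs : |θ - π| ≤ π / 2 := abs_le.2 ⟨by linarith, by linarith⟩
      have := jordan_abs (θ - π) habs
      rw [Real.sin_sub_pi, abs_neg] at this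
      have h3 : |θ - π| ≤ π / 2 * b := by nlinarith
      rw [abs_le] at h3
      exact ⟨by linarith [h3.1], by linarith [h3.2]⟩
    · right
      have habs : |θ - 2 * π| ≤ π / 2 := abs_le.2 ⟨by linarith, by linarith⟩
      have := jordan_abs (θ - 2 * π) habs
      rw [Real.sin_sub_two_pi] at this
      have h3 : |θ - 2 * π| ≤ π / 2 * b := by nlinarith
      rw [abs_le] at h3
      exact ⟨by linarith [h3.1], hθ2⟩

theorem measure_rot_pair_dist_le :
    ∃ C : ℝ, 0 < C ∧ ∀ t : ℝ, 0 < t → ∀ r : ℝ, 0 < r → r < 2 * t →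
    volume {θ : ℝ × ℝ | θ ∈ Set.Icc (0 : ℝ) (2 * Real.pi) ×ˢ Set.Icc (0 : ℝ) (2 * Real.pi) ∧
        dist (rotSL θ.1 • ptI' t) (ptI' t) ≤ r ∧ dist (rotSL θ.2 • ptI' t) (ptI' t) ≤ r}
      ≤ ENNReal.ofReal (C * Real.exp (-(2 * t) + r)) := by
  have hπ : (0:ℝ) < Real.pi := Real.pi_pos
  refine ⟨4 * Real.pi ^ 2, by positivity, ?_⟩
  intro t ht r hr hrt
  set b := Real.exp (r / 2 - t) with hb
  have hb0 : (0:ℝ) < b := Real.exp_pos _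
  set B : Set ℝ := Set.Icc (0:ℝ) (Real.pi / 2 * b)
      ∪ Set.Icc (Real.pi - Real.pi / 2 * b) (Real.pi + Real.pi / 2 * b)
      ∪ Set.Icc (2 * Real.pi - Real.pi / 2 * b) (2 * Real.pi) with hB
  have hsub : {θ : ℝ × ℝ | θ ∈ Set.Icc (0 : ℝ) (2 * Real.pi) ×ˢ Set.Icc (0 : ℝ) (2 * Real.pi) ∧
      dist (rotSL θ.1 • ptI' t) (ptI' t) ≤ r ∧ dist (rotSL θ.2 • ptI' t) (ptI' t) ≤ r}
      ⊆ B ×ˢ B := by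
    rintro ⟨θ₁, θ₂⟩ ⟨⟨hm1, hm2⟩, hd1, hd2⟩
    exact ⟨angle_mem t r θ₁ ht hr hrt hm1 hd1, angle_mem t r θ₂ ht hr hrt hm2 hd2⟩
  have hBvol : volume B ≤ ENNReal.ofReal (2 * Real.pi * b) := by
    calc volume B ≤ volume (Set.Icc (0:ℝ) (Real.pi / 2 * b)
          ∪ Set.Icc (Real.pi - Real.pi / 2 * b) (Real.pi + Real.pi / 2 * b))
        + volume (Set.Icc (2 * Real.pi - Real.pi / 2 * b) (2 * Real.pi)) := measure_union_le _ _
    _ ≤ volume (Set.Icc (0:ℝ) (Real.pi / 2 * b))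
        + volume (Set.Icc (Real.pi - Real.pi / 2 * b) (Real.pi + Real.pi / 2 * b))
        + volume (Set.Icc (2 * Real.pi - Real.pi / 2 * b) (2 * Real.pi)) := by
      gcongr; exact measure_union_le _ _
    _ = ENNReal.ofReal (Real.pi / 2 * b - 0) + ENNReal.ofReal (Real.pi + Real.pi / 2 * b - (Real.pi - Real.pi / 2 * b))
        + ENNReal.ofReal (2 * Real.pi - (2 * Real.pi - Real.pi / 2 * b)) := by
      rw [Real.volume_Icc, Real.volume_Icc, Real.volume_Icc]
    _ ≤ ENNReal.ofReal (2 * Real.pi * b) := by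
      rw [← ENNReal.ofReal_add (by nlinarith) (by nlinarith), ← ENNReal.ofReal_add (by nlinarith) (by nlinarith)]
      apply ENNReal.ofReal_le_ofReal
      ring_nf
      nlinarith
  calc volume {θ : ℝ × ℝ | θ ∈ Set.Icc (0 : ℝ) (2 * Real.pi) ×ˢ Set.Icc (0 : ℝ) (2 * Real.pi) ∧
      dist (rotSL θ.1 • ptI' t) (ptI' t) ≤ r ∧ dist (rotSL θ.2 • ptI' t) (ptI' t) ≤ r}
      ≤ volume (B ×ˢ B) := measure_mono hsub
  _ = volume B * volume B := by rw [Measure.volume_eq_prod, Measure.prod_prod]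
  _ ≤ ENNReal.ofReal (2 * Real.pi * b) * ENNReal.ofReal (2 * Real.pi * b) := mul_le_mul' hBvol hBvol
  _ = ENNReal.ofReal (2 * Real.pi * b * (2 * Real.pi * b)) := (ENNReal.ofReal_mul (by positivity)).symm
  _ = ENNReal.ofReal (4 * Real.pi ^ 2 * Real.exp (-(2 * t) + r)) := by
    congr 1
    have : b * b = Real.exp (-(2 * t) + r) := by
      rw [hb, ← Real.exp_add]; ring_nf
    nlinarith [this]
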